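/- Let T be a Hom-finite k-linear Krull–Schmidt triangulated category admitting AR triangles, and suppose that for some indecomposable object X there is an isomorphism X ≅ τX, where τX is the starting term of the AR triangle τX → E → X → τX[1]. Assume additionally that [X] + [τX] − [E] = [X[−1]] + [τX[−1]] − [E[−1]] in the free abelian group on isomorphism classes of indecomposables. Then X ≅ X[−1]. -/

import Mathlib

open CategoryTheory CategoryTheory.Limits Module

noncomputable section

set_option linter.unusedSectionVars false
set_option linter.unusedVariables false
set_option linter.unnecessarySimpa false
set_option maxHeartbeats 800000

namespace TwoPeriodicityAux

section RingLemmas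
variable {R : Type*} [Ring R] [IsLocalRing R]
lemma eq_one_of_idem_of_isUnit {e : R} (he : e * e = e) (hu : IsUnit e) : e = 1 := by
  obtain ⟨u, rfl⟩ := hu
  calc (u : R) = (↑u * ↑u) * ↑u⁻¹ := by rw [mul_assoc, u.mul_inv, mul_one]
  _ = ↑u * ↑u⁻¹ := by rw [he]
  _ = 1 := u.mul_inv
lemma idem_eq_zero_or_one {e : R} (he : e * e = e) : e = 0 ∨ e = 1 := by
  rcases IsLocalRing.isUnit_or_isUnit_of_add_one (a := e) (b := 1 - e)
      (by rw [add_sub_cancel]) with h | h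
  · exact Or.inr (eq_one_of_idem_of_isUnit he h)
  · have h2 : (1 - e) * (1 - e) = 1 - e := by
      rw [sub_mul, one_mul, mul_sub, mul_one, he, sub_self, sub_zero]
    exact Or.inl (sub_eq_self.mp (eq_one_of_idem_of_isUnit h2 h))
lemma isUnit_pair_of_mul_eq_one {x y : R} (h : x * y = 1) : IsUnit x ∧ IsUnit y := by
  have hyx : (y * x) * (y * x) = y * x := by
    rw [mul_assoc, ← mul_assoc x y x, h, one_mul]
  rcases idem_eq_zero_or_one hyx with h0 | h1
  · exfalso
    have hx0 : x = x * (y * x) := by rw [← mul_assoc, h, one_mul]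
    rw [h0, mul_zero] at hx0
    rw [hx0, zero_mul] at h
    exact one_ne_zero h.symm
  · exact ⟨⟨⟨x, y, h, h1⟩, rfl⟩, ⟨⟨y, x, h1, h⟩, rfl⟩⟩
lemma isUnit_both_of_isUnit_mul {x y : R} (h : IsUnit (x * y)) : IsUnit x ∧ IsUnit y := by
  obtain ⟨u, hu⟩ := h
  have h1 : x * (y * ↑u⁻¹) = 1 := by rw [← mul_assoc, ← hu, u.mul_inv]
  obtain ⟨hx, hyu⟩ := isUnit_pair_of_mul_eq_one h1
  refine ⟨hx, ?_⟩
  have h2 : IsUnit ((y * ↑u⁻¹) * ↑u) := hyu.mul u.isUnit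
  rwa [mul_assoc, u.inv_mul, mul_one] at h2
lemma not_isUnit_add {x y : R} (hx : ¬IsUnit x) (hy : ¬IsUnit y) : ¬IsUnit (x + y) := by
  intro h
  obtain ⟨u, hu⟩ := h
  have h1 : ↑u⁻¹ * x + ↑u⁻¹ * y = 1 := by rw [← mul_add, ← hu, u.inv_mul]
  rcases IsLocalRing.isUnit_or_isUnit_of_add_one h1 with h | h
  · exact hx (isUnit_both_of_isUnit_mul h).2
  · exact hy (isUnit_both_of_isUnit_mul h).2
lemma not_isUnit_sum {ι : Type*} (s : Finset ι) (g : ι → R)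
    (h : ∀ i ∈ s, ¬IsUnit (g i)) : ¬IsUnit (∑ i ∈ s, g i) := by
  classical
  induction s using Finset.cons_induction with
  | empty => simpa using not_isUnit_zero
  | cons a s ha ih =>
    rw [Finset.sum_cons]
    exact not_isUnit_add (h a (Finset.mem_cons_self a s))
      (ih fun i hi => h i (Finset.mem_cons_of_mem hi))
end RingLemmas

lemma isLocalRing_of_ringEquiv {R S : Type*} [Ring R] [Ring S] [IsLocalRing R]
    (e : R ≃+* S) : IsLocalRing S := by
  haveI : Nontrivial S := e.symm.toEquiv.nontrivial
  constructor
  intro a b h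
  have h1 : e.symm a + e.symm b = 1 := by rw [← map_add, h, map_one]
  rcases IsLocalRing.isUnit_or_isUnit_of_add_one h1 with h2 | h2
  · exact Or.inl (by simpa using h2.map (e : R →+* S))
  · exact Or.inr (by simpa using h2.map (e : R →+* S))

section Cat

variable {k : Type*} [Field k] {C : Type*} [Category C] [Preadditive C] [Linear k C]

/-- view an endomorphism as an element of the endomorphism ring -/
abbrev asEnd {X : C} (f : X ⟶ X) : End X := f

lemma isUnit_asEnd_iff {X : C} (f : X ⟶ X) : IsUnit (asEnd f) ↔ IsIso f :=
  CategoryTheory.isUnit_iff_isIso f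

lemma not_isIso_add {X : C} [IsLocalRing (End X)] {a b : X ⟶ X}
    (ha : ¬IsIso a) (hb : ¬IsIso b) : ¬IsIso (a + b) := by
  intro h
  have h' : IsUnit (asEnd a + asEnd b) := (isUnit_asEnd_iff (a + b)).mpr h
  exact not_isUnit_add (fun hu => ha ((isUnit_asEnd_iff a).mp hu))
    (fun hu => hb ((isUnit_asEnd_iff b).mp hu)) h'

lemma not_isIso_zero' (X : C) [IsLocalRing (End X)] : ¬IsIso (0 : X ⟶ X) := by
  intro h
  exact not_isUnit_zero ((isUnit_asEnd_iff (0 : X ⟶ X)).mpr h)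

lemma not_isIso_smul {X : C} [IsLocalRing (End X)] {c : k} {a : X ⟶ X}
    (ha : ¬IsIso a) : ¬IsIso (c • a) := by
  intro h
  have h' : IsUnit (c • asEnd a) := (isUnit_asEnd_iff (c • a)).mpr h
  rcases eq_or_ne c 0 with rfl | hc
  · rw [zero_smul] at h'
    exact not_isUnit_zero h'
  · rw [Algebra.smul_def] at h'
    exact ha ((isUnit_asEnd_iff a).mp (isUnit_both_of_isUnit_mul h').2)

lemma not_isIso_sum {X : C} [IsLocalRing (End X)] {ι : Type*} (s : Finset ι)
    (g : ι → (X ⟶ X)) (h : ∀ i ∈ s, ¬IsIso (g i)) : ¬IsIso (∑ i ∈ s, g i) := by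
  classical
  induction s using Finset.cons_induction with
  | empty => simpa using not_isIso_zero' X
  | cons a s ha ih =>
    rw [Finset.sum_cons]
    exact not_isIso_add (h a (Finset.mem_cons_self a s))
      (ih fun i hi => h i (Finset.mem_cons_of_mem hi))

variable (k) in
/-- the radical of `Hom(X, M)`: maps `u` such that `u ≫ v` is never invertible. -/
def radSub (X M : C) [IsLocalRing (End X)] : Submodule k (X ⟶ M) where
  carrier := {u | ∀ v : M ⟶ X, ¬ IsIso (u ≫ v)}
  zero_mem' := by
    intro v
    rw [Limits.zero_comp]
    exact not_isIso_zero' X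
  add_mem' := by
    intro a b ha hb v
    rw [Preadditive.add_comp]
    exact not_isIso_add (ha v) (hb v)
  smul_mem' := by
    intro c u hu v
    rw [Linear.smul_comp]
    exact not_isIso_smul (hu v)

lemma mem_radSub_iff {X M : C} [IsLocalRing (End X)] {u : X ⟶ M} :
    u ∈ radSub k X M ↔ ∀ v : M ⟶ X, ¬ IsIso (u ≫ v) := Iff.rfl

lemma mem_radSub_self_iff {X : C} [IsLocalRing (End X)] {u : X ⟶ X} :
    u ∈ radSub k X X ↔ ¬ IsIso u := by
  constructor
  · intro h
    simpa [Category.comp_id] using h (𝟙 X)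
  · intro h v hv
    have h' : IsUnit (asEnd v * asEnd u) := (isUnit_asEnd_iff (u ≫ v)).mpr hv
    exact h ((isUnit_asEnd_iff u).mp (isUnit_both_of_isUnit_mul h').2)

lemma nonempty_iso_of_isIso {X M : C} [IsLocalRing (End X)] [IsLocalRing (End M)]
    {u : X ⟶ M} {v : M ⟶ X} (h : IsIso (u ≫ v)) : Nonempty (X ≅ M) := by
  set v' : M ⟶ X := v ≫ inv (u ≫ v) with hv'
  have huv : u ≫ v' = 𝟙 X := by
    rw [hv', ← Category.assoc, IsIso.hom_inv_id]
  set p : M ⟶ M := v' ≫ u with hp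
  have hpp : asEnd p * asEnd p = asEnd p := by
    show p ≫ p = p
    rw [hp, Category.assoc, ← Category.assoc u, huv, Category.id_comp]
  rcases idem_eq_zero_or_one hpp with h0 | h1
  · exfalso
    have h2 : u ≫ p ≫ v' = 𝟙 X := by
      have hassoc : u ≫ (v' ≫ u) ≫ v' = (u ≫ v') ≫ u ≫ v' := by
        simp only [Category.assoc]
      rw [hp, hassoc, huv, Category.id_comp]
    have h0' : p = (0 : M ⟶ M) := h0
    rw [h0'] at h2
    simp only [Limits.zero_comp, Limits.comp_zero] at h2
    exact one_ne_zero (α := End X) h2.symm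
  · exact ⟨⟨u, v', huv, h1⟩⟩

lemma radSub_eq_top {X M : C} [IsLocalRing (End X)] [IsLocalRing (End M)]
    (hne : ¬Nonempty (X ≅ M)) : radSub k X M = ⊤ := by
  ext u
  simp only [Submodule.mem_top, iff_true]
  intro v hv
  exact hne (nonempty_iso_of_isIso hv)

/-- post-composition with an isomorphism, as a linear equivalence. -/
@[simps]
def isoHomEquiv {A M N : C} (i : M ≅ N) : (A ⟶ M) ≃ₗ[k] (A ⟶ N) where
  toFun u := u ≫ i.hom
  invFun u := u ≫ i.inv
  left_inv u := by simp
  right_inv u := by simp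
  map_add' u v := by simp [Preadditive.add_comp]
  map_smul' c u := by simp

lemma finrank_hom_iso (A : C) {M N : C} (i : M ≅ N) :
    finrank k (A ⟶ M) = finrank k (A ⟶ N) :=
  (isoHomEquiv (k := k) i).finrank_eq

lemma map_radSub_isoHomEquiv {X M N : C} [IsLocalRing (End X)] (i : M ≅ N) :
    (radSub k X M).map ((isoHomEquiv (k := k) i).toLinearMap) = radSub k X N := by
  ext u
  simp only [Submodule.mem_map]
  constructor
  · rintro ⟨a, ha, rfl⟩
    intro v
    have := ha (i.hom ≫ v)
    simpa [Category.assoc] using this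
  · intro hu
    refine ⟨u ≫ i.inv, fun v => ?_, by simp⟩
    have := hu (i.inv ≫ v)
    simpa [Category.assoc] using this

lemma finrank_radSub_iso {X M N : C} [IsLocalRing (End X)] (i : M ≅ N) :
    finrank k (radSub k X M) = finrank k (radSub k X N) := by
  have h := map_radSub_isoHomEquiv (k := k) (X := X) i
  rw [← h]
  exact (LinearEquiv.finrank_map_eq (isoHomEquiv (k := k) i) (radSub k X M)).symm

section Biprod

/-- submodule product is equivalent to product of submodules -/
def prodSubEquiv {M N : Type*} [AddCommGroup M] [AddCommGroup N] [Module k M]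
    [Module k N] (p : Submodule k M) (q : Submodule k N) :
    (p.prod q) ≃ₗ[k] (p × q) where
  toFun x := (⟨x.1.1, x.2.1⟩, ⟨x.1.2, x.2.2⟩)
  invFun y := ⟨(y.1.1, y.2.1), ⟨y.1.2, y.2.2⟩⟩
  left_inv x := rfl
  right_inv y := rfl
  map_add' x y := rfl
  map_smul' c x := rfl

/-- pi of submodules -/
def piSubEquiv {ι : Type*} {M : ι → Type*} [∀ i, AddCommGroup (M i)]
    [∀ i, Module k (M i)] (p : ∀ i, Submodule k (M i)) :
    (Submodule.pi Set.univ p) ≃ₗ[k] ((i : ι) → p i) where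
  toFun x i := ⟨x.1 i, x.2 i (Set.mem_univ i)⟩
  invFun g := ⟨fun i => (g i : M i), fun i _ => (g i).2⟩
  left_inv x := rfl
  right_inv g := rfl
  map_add' x y := rfl
  map_smul' c x := rfl

/-- homs into a binary biproduct -/
def biprodHomEquiv (A M N : C) [HasBinaryBiproduct M N] :
    (A ⟶ M ⊞ N) ≃ₗ[k] (A ⟶ M) × (A ⟶ N) where
  toFun u := (u ≫ biprod.fst, u ≫ biprod.snd)
  invFun g := biprod.lift g.1 g.2
  left_inv u := by apply biprod.hom_ext <;> simp
  right_inv g := by refine Prod.ext ?_ ?_ <;> simp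
  map_add' u v := by
    refine Prod.ext ?_ ?_ <;> simp [Preadditive.add_comp]
  map_smul' c u := by
    refine Prod.ext ?_ ?_ <;> simp

lemma biprod_comp_decomp {A M N : C} [HasBinaryBiproduct M N]
    (u : A ⟶ M ⊞ N) (v : M ⊞ N ⟶ A) :
    u ≫ v = (u ≫ biprod.fst) ≫ (biprod.inl ≫ v)
      + (u ≫ biprod.snd) ≫ (biprod.inr ≫ v) := by
  calc u ≫ v = u ≫ 𝟙 (M ⊞ N) ≫ v := by rw [Category.id_comp]
  _ = u ≫ (biprod.fst ≫ biprod.inl + biprod.snd ≫ biprod.inr) ≫ v := by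
      rw [biprod.total]
  _ = _ := by
      simp only [Preadditive.add_comp, Preadditive.comp_add, Category.assoc]

lemma map_radSub_biprod {X M N : C} [IsLocalRing (End X)] [HasBinaryBiproduct M N] :
    (radSub k X (M ⊞ N)).map ((biprodHomEquiv (k := k) X M N).toLinearMap)
      = (radSub k X M).prod (radSub k X N) := by
  ext u
  simp only [Submodule.mem_map, Submodule.mem_prod]
  constructor
  · rintro ⟨a, ha, rfl⟩
    constructor
    · intro v
      have := ha (biprod.fst ≫ v)
      simpa [biprodHomEquiv, Category.assoc] using this
    · intro v
      have := ha (biprod.snd ≫ v)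
      simpa [biprodHomEquiv, Category.assoc] using this
  · rintro ⟨h1, h2⟩
    refine ⟨biprod.lift u.1 u.2, fun v => ?_, ?_⟩
    · rw [biprod_comp_decomp]
      have e1 : biprod.lift u.1 u.2 ≫ biprod.fst = u.1 := by simp
      have e2 : biprod.lift u.1 u.2 ≫ biprod.snd = u.2 := by simp
      rw [e1, e2]
      exact not_isIso_add (h1 _) (h2 _)
    · refine Prod.ext ?_ ?_ <;> simp [biprodHomEquiv]

lemma finrank_hom_biprod (homFinite : ∀ A B : C, FiniteDimensional k (A ⟶ B))
    (A M N : C) [HasBinaryBiproduct M N] :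
    finrank k (A ⟶ M ⊞ N) = finrank k (A ⟶ M) + finrank k (A ⟶ N) := by
  haveI := homFinite A M
  haveI := homFinite A N
  rw [(biprodHomEquiv (k := k) A M N).finrank_eq]
  exact Module.finrank_prod

lemma finrank_radSub_biprod (homFinite : ∀ A B : C, FiniteDimensional k (A ⟶ B))
    {X : C} [IsLocalRing (End X)] (M N : C) [HasBinaryBiproduct M N] :
    finrank k (radSub k X (M ⊞ N))
      = finrank k (radSub k X M) + finrank k (radSub k X N) := by
  haveI := homFinite X M
  haveI := homFinite X N
  have h := map_radSub_biprod (k := k) (X := X) (M := M) (N := N)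
  have h2 := (LinearEquiv.finrank_map_eq (biprodHomEquiv (k := k) X M N)
    (radSub k X (M ⊞ N)))
  rw [h] at h2
  rw [← h2, (prodSubEquiv (k := k) (radSub k X M) (radSub k X N)).finrank_eq]
  exact Module.finrank_prod

end Biprod
section FinBiprod

/-- homs into a finite biproduct -/
def biproductHomEquiv (A : C) {n : ℕ} (f : Fin n → C) [HasBiproduct f] :
    (A ⟶ ⨁ f) ≃ₗ[k] ((i : Fin n) → (A ⟶ f i)) where
  toFun u i := u ≫ biproduct.π f i
  invFun g := biproduct.lift g
  left_inv u := by apply biproduct.hom_ext; simp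
  right_inv g := by funext i; simp
  map_add' u v := by funext i; simp [Preadditive.add_comp]
  map_smul' c u := by funext i; simp

lemma biproduct_comp_decomp {A : C} {n : ℕ} (f : Fin n → C) [HasBiproduct f]
    (u : A ⟶ ⨁ f) (v : ⨁ f ⟶ A) :
    u ≫ v = ∑ i, (u ≫ biproduct.π f i) ≫ (biproduct.ι f i ≫ v) := by
  calc u ≫ v = u ≫ 𝟙 (⨁ f) ≫ v := by rw [Category.id_comp]
  _ = u ≫ (∑ i, biproduct.π f i ≫ biproduct.ι f i) ≫ v := by rw [biproduct.total]
  _ = _ := by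
    rw [Preadditive.sum_comp, Preadditive.comp_sum]
    simp only [Category.assoc]

lemma map_radSub_biproduct {X : C} [IsLocalRing (End X)] {n : ℕ} (f : Fin n → C)
    [HasBiproduct f] :
    (radSub k X (⨁ f)).map ((biproductHomEquiv (k := k) X f).toLinearMap)
      = Submodule.pi Set.univ (fun i => radSub k X (f i)) := by
  ext u
  simp only [Submodule.mem_map, Submodule.mem_pi, Set.mem_univ, forall_true_left]
  constructor
  · rintro ⟨a, ha, rfl⟩
    intro i v
    have := ha (biproduct.π f i ≫ v)
    simpa [biproductHomEquiv, Category.assoc] using this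
  · intro h
    refine ⟨biproduct.lift u, fun v => ?_, ?_⟩
    · rw [biproduct_comp_decomp]
      have e : ∀ i, biproduct.lift u ≫ biproduct.π f i = u i := by simp
      refine not_isIso_sum _ _ (fun i _ => ?_)
      rw [e i]
      exact h i _
    · funext i
      simp [biproductHomEquiv]

lemma finrank_hom_biproduct (homFinite : ∀ A B : C, FiniteDimensional k (A ⟶ B))
    (A : C) {n : ℕ} (f : Fin n → C) [HasBiproduct f] :
    finrank k (A ⟶ ⨁ f) = ∑ i, finrank k (A ⟶ f i) := by
  haveI : ∀ i, FiniteDimensional k (A ⟶ f i) := fun i => homFinite A (f i)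
  rw [(biproductHomEquiv (k := k) A f).finrank_eq]
  exact Module.finrank_pi_fintype k

lemma finrank_radSub_biproduct (homFinite : ∀ A B : C, FiniteDimensional k (A ⟶ B))
    {X : C} [IsLocalRing (End X)] {n : ℕ} (f : Fin n → C) [HasBiproduct f] :
    finrank k (radSub k X (⨁ f)) = ∑ i, finrank k (radSub k X (f i)) := by
  haveI : ∀ i, FiniteDimensional k (X ⟶ f i) := fun i => homFinite X (f i)
  have h := map_radSub_biproduct (k := k) (X := X) (f := f)
  have h2 := LinearEquiv.finrank_map_eq (biproductHomEquiv (k := k) X f)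
    (radSub k X (⨁ f))
  rw [h] at h2
  rw [← h2, (piSubEquiv (k := k) (fun i => radSub k X (f i))).finrank_eq]
  exact Module.finrank_pi_fintype k

lemma key_count (homFinite : ∀ A B : C, FiniteDimensional k (A ⟶ B))
    {X : C} [IsLocalRing (End X)] {n : ℕ} (f : Fin n → C)
    (hloc : ∀ i, IsLocalRing (End (f i))) [HasBiproduct f] :
    finrank k (X ⟶ ⨁ f) * finrank k (X ⟶ X)
      ≤ finrank k (radSub k X (⨁ f)) * finrank k (X ⟶ X)
        + finrank k (X ⟶ ⨁ f)
          * (finrank k (X ⟶ X) - finrank k (radSub k X X)) := by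
  rw [finrank_hom_biproduct homFinite, finrank_radSub_biproduct homFinite,
    Finset.sum_mul, Finset.sum_mul, Finset.sum_mul, ← Finset.sum_add_distrib]
  apply Finset.sum_le_sum
  intro i _
  haveI := hloc i
  by_cases hiso : Nonempty (X ≅ f i)
  · obtain ⟨j⟩ := hiso
    rw [← finrank_hom_iso (k := k) X j, ← finrank_radSub_iso (k := k) j]
    haveI := homFinite X X
    have hs : finrank k (radSub k X X) ≤ finrank k (X ⟶ X) :=
      Submodule.finrank_le _
    obtain ⟨d, hd⟩ := Nat.le.dest hs
    rw [← hd, Nat.add_sub_cancel_left]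
    ring_nf
    omega
  · have htop := radSub_eq_top (k := k) (M := f i) hiso
    rw [htop, finrank_top]
    exact Nat.le_add_right _ _

end FinBiprod

section Shift

variable [HasShift C ℤ] [∀ n : ℤ, (shiftFunctor C n).Additive]

/-- shifting gives a ring isomorphism of endomorphism rings -/
def shiftEndRingEquiv (n : ℤ) (Y : C) : End Y ≃+* End (Y⟦n⟧) where
  toFun a := (shiftFunctor C n).map a
  invFun b := (shiftFunctor C n).preimage b
  left_inv a := (shiftFunctor C n).preimage_map a
  right_inv b := (shiftFunctor C n).map_preimage b
  map_mul' a b := (shiftFunctor C n).map_comp b a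
  map_add' a b := (shiftFunctor C n).map_add

end Shift

end Cat

end TwoPeriodicityAux

open TwoPeriodicityAux

variable {k : Type*} [Field k] {C : Type*} [Category C] [Preadditive C]
  [Linear k C] [HasZeroObject C] [HasFiniteBiproducts C] [HasBinaryBiproducts C]
  [HasShift C ℤ] [∀ n : ℤ, (shiftFunctor C n).Additive] [Pretriangulated C]

/-- Remark 3.3(2): if `X` is indecomposable with an AR triangle
`τX → E → X → τX[1]` satisfying the shift-invariance condition (∗)
(expressed, via the Krull–Schmidt property, as an isomorphism
`X ⊕ τX ⊕ E[-1] ≅ X[-1] ⊕ τX[-1] ⊕ E`), and `X ≅ τX`, then `X ≅ X[-1]`. -/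
theorem two_periodicity_of_tau_fixed
    (homFinite : ∀ X Y : C, FiniteDimensional k (X ⟶ Y))
    (hKS : ∀ X : C, ∃ (n : ℕ) (f : Fin n → C),
      (∀ i, IsLocalRing (End (f i))) ∧ Nonempty (X ≅ ⨁ f))
    {T E X : C} (g : T ⟶ E) (f : E ⟶ X) (w : X ⟶ T⟦(1 : ℤ)⟧)
    (hdist : Pretriangulated.Triangle.mk g f w ∈ distTriang C)
    (hw : w ≠ 0)
    (hXind : Indecomposable X) (hTind : Indecomposable T)
    (hXres : IsLocalRing (End X)) (hTres : IsLocalRing (End T))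
    (hAR : ∀ (W : C) (g' : W ⟶ X), (¬∃ s : X ⟶ W, s ≫ g' = 𝟙 X) →
      ∃ h : W ⟶ E, h ≫ f = g')
    (hstar : Nonempty (X ⊞ T ⊞ E⟦(-1 : ℤ)⟧ ≅ X⟦(-1 : ℤ)⟧ ⊞ T⟦(-1 : ℤ)⟧ ⊞ E))
    (htau : Nonempty (X ≅ T)) :
    Nonempty (X ≅ X⟦(-1 : ℤ)⟧) := by
  by_contra hcon
  obtain ⟨it⟩ := htau
  obtain ⟨st⟩ := hstar
  haveI : IsLocalRing (End X) := hXres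
  haveI : IsLocalRing (End T) := hTres
  haveI : IsLocalRing (End (X⟦(-1 : ℤ)⟧)) :=
    isLocalRing_of_ringEquiv (shiftEndRingEquiv (-1 : ℤ) X)
  haveI : IsLocalRing (End (T⟦(-1 : ℤ)⟧)) :=
    isLocalRing_of_ringEquiv (shiftEndRingEquiv (-1 : ℤ) T)
  haveI := homFinite X X
  haveI := homFinite X T
  haveI := homFinite X E
  -- notation
  set mX := finrank k (X ⟶ X) with hmXdef
  set sX := finrank k (radSub k X X) with hsXdef
  -- q ≥ 1
  have hlt : sX < mX := by
    apply Submodule.finrank_lt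
    intro htop
    have : 𝟙 X ∈ radSub k X X := htop ▸ Submodule.mem_top
    rw [mem_radSub_self_iff] at this
    exact this (by infer_instance)
  -- the radicals of the shifted objects are everything
  have hcon' : ¬ Nonempty (X ≅ T⟦(-1 : ℤ)⟧) := by
    rintro ⟨j⟩
    exact hcon ⟨j.trans ((shiftFunctor C (-1 : ℤ)).mapIso it.symm)⟩
  have hsX1 : finrank k (radSub k X (X⟦(-1 : ℤ)⟧))
      = finrank k (X ⟶ X⟦(-1 : ℤ)⟧) := by
    rw [radSub_eq_top (k := k) hcon, finrank_top]
  have hsT1 : finrank k (radSub k X (T⟦(-1 : ℤ)⟧))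
      = finrank k (X ⟶ T⟦(-1 : ℤ)⟧) := by
    rw [radSub_eq_top (k := k) hcon', finrank_top]
  have hmT : finrank k (X ⟶ T) = mX := (finrank_hom_iso (k := k) X it).symm
  have hsT : finrank k (radSub k X T) = sX := (finrank_radSub_iso (k := k) it).symm
  -- the AR bound : finrank (X ⟶ E) ≤ mX + sX
  have hARb : finrank k (X ⟶ E) ≤ mX + sX := by
    set φ : (X ⟶ E) →ₗ[k] (X ⟶ X) := Linear.rightComp k X f with hφ
    have hrange : LinearMap.range φ = radSub k X X := by
      ext g'
      simp only [LinearMap.mem_range, hφ, Linear.rightComp_apply]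
      constructor
      · rintro ⟨h, rfl⟩
        rw [mem_radSub_self_iff]
        intro hiso
        have h23 : f ≫ w = 0 := Pretriangulated.comp_distTriang_mor_zero₂₃ _ hdist
        apply hw
        calc w = 𝟙 X ≫ w := (Category.id_comp w).symm
        _ = (inv (h ≫ f) ≫ (h ≫ f)) ≫ w := by rw [IsIso.inv_hom_id]
        _ = inv (h ≫ f) ≫ h ≫ f ≫ w := by simp only [Category.assoc]
        _ = 0 := by rw [h23]; simp
      · intro hg'
        rw [mem_radSub_self_iff] at hg'
        refine hAR X g' ?_
        rintro ⟨s, hs⟩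
        apply hg'
        have hmul : asEnd g' * asEnd s = 1 := hs
        exact (isUnit_asEnd_iff g').mp (isUnit_pair_of_mul_eq_one hmul).1
    have hker : LinearMap.ker φ ≤ LinearMap.range (Linear.rightComp k X g) := by
      intro h hh
      rw [LinearMap.mem_ker, hφ, Linear.rightComp_apply] at hh
      obtain ⟨t, ht⟩ := Pretriangulated.Triangle.coyoneda_exact₂ _ hdist h hh
      exact ⟨t, ht.symm⟩
    have hrank := LinearMap.finrank_range_add_finrank_ker φ
    rw [hrange] at hrank
    have hkle : finrank k (LinearMap.ker φ)
        ≤ finrank k (X ⟶ T) :=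
      le_trans (Submodule.finrank_mono hker) (LinearMap.finrank_range_le _)
    rw [hmT] at hkle
    omega
  -- Krull-Schmidt counting for E
  obtain ⟨n, fd, hloc, ⟨eE⟩⟩ := hKS E
  have hcount := key_count (k := k) (X := X) homFinite fd hloc
  rw [← finrank_hom_iso (k := k) X eE, ← finrank_radSub_iso (k := k) (X := X) eE] at hcount
  rw [← hmXdef, ← hsXdef] at hcount
  -- the eq from hstar
  have hm := finrank_hom_iso (k := k) X st
  rw [finrank_hom_biprod homFinite, finrank_hom_biprod homFinite,
    finrank_hom_biprod homFinite, finrank_hom_biprod homFinite] at hm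
  have hs := finrank_radSub_iso (k := k) (X := X) st
  rw [finrank_radSub_biprod (X := X) homFinite, finrank_radSub_biprod (X := X) homFinite,
    finrank_radSub_biprod (X := X) homFinite, finrank_radSub_biprod (X := X) homFinite] at hs
  -- abbreviations
  set mE := finrank k (X ⟶ E) with hmE
  set sE := finrank k (radSub k X E) with hsE
  set mE' := finrank k (X ⟶ E⟦(-1 : ℤ)⟧) with hmE'
  set sE' := finrank k (radSub k X (E⟦(-1 : ℤ)⟧)) with hsE'
  have hsE'le : sE' ≤ mE' := by
    haveI := homFinite X (E⟦(-1 : ℤ)⟧)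
    exact Submodule.finrank_le _
  have hsEle : sE ≤ mE := by
    exact Submodule.finrank_le _
  -- derive mE ≥ sE + 2 * (mX - sX)
  rw [hmT] at hm
  rw [hsT] at hs
  have hge : sE + 2 * (mX - sX) ≤ mE := by omega
  -- final contradiction
  obtain ⟨q, hq, hq1⟩ : ∃ q, mX = sX + q ∧ 1 ≤ q := ⟨mX - sX, by omega, by omega⟩
  have hsub : mX - sX = q := by omega
  rw [hsub, hq] at hcount
  have hα : mE * sX ≤ sE * sX + sE * q := by nlinarith [hcount]
  rw [hsub] at hge
  have h1 : (sE + 2 * q) * sX ≤ mE * sX := Nat.mul_le_mul_right sX hge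
  have hqle : q * (2 * sX) ≤ q * sE := by nlinarith [h1, hα]
  have h2sX : 2 * sX ≤ sE := Nat.le_of_mul_le_mul_left hqle (by omega)
  omega

end
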